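/- Let X be a nonnegative real random variable with E[X] < ∞, let B ≥ 1 be an integer, and let s > 0. Define the unsigned model derivatives φ_u(s) = (4^{−B}/6)·s·P(X ≤ s) + 2·E[(s − X)·𝟙{X > s}] and ψ_u(s) = (4^{−B}/6)·P(X ≤ s) + 2·P(X > s). Then ψ_u(s) > 0 and the Newton–Raphson step s − φ_u(s)/ψ_u(s) equals E[X·𝟙{X > s}] / ((4^{−B}/12)·P(X ≤ s) + P(X > s)). (Unsigned analogue of Theorem 1.) -/

import Mathlib

open MeasureTheory
open scoped ProbabilityTheory

/-- Unsigned model first derivative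
`φ_u(s) = (4^{−B}/6)·s·P(X ≤ s) + 2·E[(s − X)·𝟙{X > s}]`. -/
noncomputable def phiu {Ω : Type*} [MeasureSpace Ω] (X : Ω → ℝ) (B : ℕ) (s : ℝ) : ℝ :=
  ((4 : ℝ) ^ (-(B : ℤ)) / 6) * s * (ℙ {ω | X ω ≤ s}).toReal
    + 2 * ∫ ω in {ω | s < X ω}, (s - X ω) ∂ℙ

/-- Unsigned model second derivative
`ψ_u(s) = (4^{−B}/6)·P(X ≤ s) + 2·P(X > s)`. -/
noncomputable def psiu {Ω : Type*} [MeasureSpace Ω] (X : Ω → ℝ) (B : ℕ) (s : ℝ) : ℝ :=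
  ((4 : ℝ) ^ (-(B : ℤ)) / 6) * (ℙ {ω | X ω ≤ s}).toReal + 2 * (ℙ {ω | s < X ω}).toReal

/-- Unsigned analogue of Theorem 1: `ψ_u(s) > 0` and the Newton–Raphson step
`s − φ_u(s)/ψ_u(s)` equals `E[X·𝟙{X > s}] / ((4^{−B}/12)·P(X ≤ s) + P(X > s))`. -/
theorem stmt_14 {Ω : Type*} [MeasureSpace Ω] [IsProbabilityMeasure (ℙ : Measure Ω)]
    (X : Ω → ℝ) (hX : Measurable X) (hnonneg : ∀ ω, 0 ≤ X ω) (hint : Integrable X ℙ)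
    (B : ℕ) (hB : 1 ≤ B) (s : ℝ) (hs : 0 < s) :
    0 < psiu X B s ∧
    s - phiu X B s / psiu X B s =
      (∫ ω in {ω | s < X ω}, X ω ∂ℙ) /
        (((4 : ℝ) ^ (-(B : ℤ)) / 12) * (ℙ {ω | X ω ≤ s}).toReal +
          (ℙ {ω | s < X ω}).toReal) := by
  set x : ℝ := (4 : ℝ) ^ (-(B : ℤ)) with hxdef
  have hx0 : 0 < x := zpow_pos (by norm_num) _
  have hx1 : x ≤ 1 := zpow_le_one_of_nonpos₀ (by norm_num) (by simp)
  set A : Set Ω := {ω | s < X ω} with hA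
  have hAm : MeasurableSet A := measurableSet_lt measurable_const hX
  have hcompl : {ω | X ω ≤ s} = Aᶜ := by
    ext ω; simp [hA, not_lt]
  set p : ℝ := (ℙ {ω | X ω ≤ s}).toReal with hp
  set q : ℝ := (ℙ A).toReal with hq
  have hp0 : 0 ≤ p := ENNReal.toReal_nonneg
  have hq0 : 0 ≤ q := ENNReal.toReal_nonneg
  have hpq : p + q = 1 := by
    rw [hp, hq, hcompl]
    have := measure_compl hAm (measure_ne_top ℙ A)
    rw [this, measure_univ]
    rw [ENNReal.toReal_sub_of_le prob_le_one (by norm_num)]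
    simp
  have hψ : 0 < psiu X B s := by
    have : psiu X B s = (x / 6) * p + 2 * q := rfl
    rw [this]
    nlinarith [hx0, hx1, hp0, hq0, hpq]
  refine ⟨hψ, ?_⟩
  set I : ℝ := ∫ ω in A, X ω ∂ℙ with hI
  have hsplit : (∫ ω in A, (s - X ω) ∂ℙ) = s * q - I := by
    rw [integral_sub (integrableOn_const (measure_ne_top ℙ A) enorm_ne_top : IntegrableOn (fun _ => s) A ℙ)
      hint.integrableOn]
    rw [setIntegral_const]
    simp [hq, mul_comm, measureReal_def, hI]
  have hφ : phiu X B s = (x / 6) * s * p + 2 * (s * q - I) := by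
    rw [phiu, hsplit]
  have hψd : psiu X B s = (x / 6) * p + 2 * q := rfl
  have hψne : (x / 6) * p + 2 * q ≠ 0 := by rw [← hψd]; exact hψ.ne'
  have hDne : (x / 12) * p + q ≠ 0 := by
    intro h
    apply hψne
    nlinarith [h]
  rw [hφ, hψd]
  show s - ((x / 6) * s * p + 2 * (s * q - I)) / ((x / 6) * p + 2 * q) =
      I / ((x / 12) * p + q)
  have h1 : s - (x / 6 * s * p + 2 * (s * q - I)) / (x / 6 * p + 2 * q)
      = 2 * I / (x / 6 * p + 2 * q) := by
    rw [eq_div_iff hψne, sub_mul, div_mul_cancel₀ _ hψne]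
    ring
  rw [h1, show x / 6 * p + 2 * q = 2 * (x / 12 * p + q) by ring,
    mul_div_mul_left _ _ (two_ne_zero)]
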